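/- Define f : ℓ² → ℝ by f(x) := dist(x, F), where F := ℓ² \ ⋃_{n≥2} B(pₙ, 1/(2n)) and pₙ := (1/n)(e₁ + eₙ) with (eₙ) the canonical basis of ℓ². Then f is Lipschitz with constant 1, f is Gâteaux differentiable at 0 with Gâteaux derivative 0, f is Fréchet differentiable at 0 along the hyperplane {x ∈ ℓ² : x₁ = 0}, but f is not Fréchet differentiable at 0. -/

import Mathlib

open Metric Set Topology

/-- The space `ℓ²`. -/
noncomputable abbrev Ell2 : Type := lp (fun _ : ℕ => ℝ) 2

/-- The canonical basis vectors of `ℓ²`. -/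
noncomputable def e (n : ℕ) : Ell2 := lp.single 2 n (1 : ℝ)

/-- The points `pₙ := (1/n)(e₁ + eₙ)`. -/
noncomputable def p (n : ℕ) : Ell2 := (1 / (n : ℝ)) • (e 1 + e n)

/-- `F := ℓ² \ ⋃_{n ≥ 2} B(pₙ, 1/(2n))`. -/
noncomputable def F : Set Ell2 :=
  (⋃ n ∈ {n : ℕ | 2 ≤ n}, Metric.ball (p n) (1 / (2 * (n : ℝ))))ᶜ

/-- `f x := dist(x, F)`. -/
noncomputable def f (x : Ell2) : ℝ := Metric.infDist x F

lemma coord_abs_le (x : Ell2) (i : ℕ) : |x i| ≤ ‖x‖ :=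
  lp.norm_apply_le_norm two_ne_zero x i

lemma e_apply_self (n : ℕ) : e n n = 1 := lp.single_apply_self 2 n 1
lemma e_apply_ne {n k : ℕ} (h : k ≠ n) : e n k = 0 := lp.single_apply_ne 2 n 1 h

lemma p_apply_one {n : ℕ} (hn : 2 ≤ n) : (p n) 1 = 1 / n := by
  have h1 : (1:ℕ) ≠ n := by omega
  show (1/(n:ℝ)) * (e 1 1 + e n 1) = 1/n
  rw [e_apply_self, e_apply_ne h1]; ring

lemma p_apply_self {n : ℕ} (hn : 2 ≤ n) : (p n) n = 1 / n := by
  have h1 : n ≠ (1:ℕ) := by omega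
  show (1/(n:ℝ)) * (e 1 n + e n n) = 1/n
  rw [e_apply_self, e_apply_ne h1]; ring

lemma mem_F_iff {x : Ell2} : x ∈ F ↔ ∀ n : ℕ, 2 ≤ n → ¬ dist x (p n) < 1 / (2 * n) := by
  simp [F, mem_iUnion, Metric.mem_ball]

lemma coord_sub_le {x : Ell2} {n k : ℕ} : |x k - (p n) k| ≤ dist x (p n) := by
  rw [dist_eq_norm]
  have := coord_abs_le (x - p n) k
  rwa [lp.coeFn_sub, Pi.sub_apply] at this

lemma mem_F_of_coord1_zero {x : Ell2} (h : x 1 = 0) : x ∈ F := by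
  rw [mem_F_iff]
  intro n hn hlt
  have h2 := coord_sub_le (x := x) (n := n) (k := 1)
  rw [p_apply_one hn, h] at h2
  have hn0 : (0:ℝ) < n := by positivity
  rw [zero_sub, abs_neg, abs_of_nonneg (by positivity)] at h2
  have hc : 1 / (n:ℝ) < 1 / (2 * n) := lt_of_le_of_lt h2 hlt
  rw [div_lt_div_iff₀ hn0 (by positivity)] at hc
  linarith

lemma zero_mem_F : (0 : Ell2) ∈ F := mem_F_of_coord1_zero (by simp [lp.coeFn_zero])

lemma u_tendsto (u : Ell2) : Filter.Tendsto (fun n => |u n|) Filter.atTop (𝓝 0) := by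
  have hp : 0 < (2:ENNReal).toReal := by norm_num
  have hs : Summable fun n => ‖u n‖ ^ (2:ENNReal).toReal := (lp.memℓp u).summable hp
  have hs2 : Summable fun n => |u n| ^ (2:ℕ) := by
    have : ∀ n, ‖u n‖ ^ (2:ENNReal).toReal = |u n| ^ (2:ℕ) := by
      intro n
      rw [Real.norm_eq_abs]
      norm_num [Real.rpow_natCast]
    simpa [this] using hs
  have h2 : Filter.Tendsto (fun n => |u n| ^ (2:ℕ)) Filter.atTop (𝓝 0) :=
    hs2.tendsto_atTop_zero
  have := h2.sqrt
  simpa [Real.sqrt_sq_eq_abs] using this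

lemma smul_coord (t : ℝ) (u : Ell2) (k : ℕ) : (t • u) k = t * u k := by
  simp [lp.coeFn_smul]

lemma line_eventually_mem (u : Ell2) : ∀ᶠ t in 𝓝 (0:ℝ), t • u ∈ F := by
  by_cases h1 : u 1 = 0
  · exact Filter.Eventually.of_forall fun t =>
      mem_F_of_coord1_zero (by rw [smul_coord, h1, mul_zero])
  · have hu1 : 0 < |u 1| := abs_pos.2 h1
    obtain ⟨N, hN⟩ := Filter.eventually_atTop.1
      ((u_tendsto u).eventually (gt_mem_nhds (by positivity : (0:ℝ) < |u 1| / 3)))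
    have hε : 0 < 1 / (2 * (N+1) * |u 1|) := by positivity
    filter_upwards [Metric.ball_mem_nhds (0:ℝ) hε] with t ht
    rw [Metric.mem_ball, dist_zero_right, Real.norm_eq_abs] at ht
    rw [mem_F_iff]
    intro n hn hlt
    have hn0 : (0:ℝ) < n := by positivity
    have hc1 := coord_sub_le (x := t • u) (n := n) (k := 1)
    have hcn := coord_sub_le (x := t • u) (n := n) (k := n)
    rw [p_apply_one hn, smul_coord] at hc1
    rw [p_apply_self hn, smul_coord] at hcn
    have h1a : |t * u 1 - 1/n| < 1/(2*n) := lt_of_le_of_lt hc1 hlt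
    have hna : |t * u n - 1/n| < 1/(2*n) := lt_of_le_of_lt hcn hlt
    rw [abs_lt] at h1a hna
    have ha : 1/(2*(n:ℝ)) = (1/n)/2 := by ring
    have ht1 : (1/(n:ℝ))/2 < t * u 1 := by rw [ha] at h1a; linarith [h1a.1]
    have ht2 : t * u 1 < 3 * (1/(n:ℝ)) / 2 := by rw [ha] at h1a; linarith [h1a.2]
    have htn : (1/(n:ℝ))/2 < t * u n := by rw [ha] at hna; linarith [hna.1]
    have htu1 : 0 < t * u 1 := lt_trans (by positivity) ht1
    have ht0 : t ≠ 0 := fun h => by rw [h, zero_mul] at htu1; exact lt_irrefl 0 htu1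
    have htpos : 0 < |t| := abs_pos.2 ht0
    have habs1 : t * u 1 = |t| * |u 1| := by
      rw [← abs_mul]; exact (abs_of_pos htu1).symm
    -- n is large: N ≤ n
    have hb1 : |t| * |u 1| < 1 / (2*((N:ℝ)+1)) := by
      have h := mul_lt_mul_of_pos_right ht hu1
      have e1 : 1 / (2*((N:ℝ)+1)*|u 1|) * |u 1| = 1/(2*((N:ℝ)+1)) := by
        have hne : |u 1| ≠ 0 := hu1.ne'
        field_simp
      rwa [e1] at h
    have hnN : ((N:ℝ)+1) < n := by
      have hcmp : 1/(n:ℝ) < 1/((N:ℝ)+1) := by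
        rw [habs1] at ht1
        have : 1/(n:ℝ) < 2 * (1/(2*((N:ℝ)+1))) := by linarith
        rw [show (2:ℝ) * (1/(2*((N:ℝ)+1))) = 1/((N:ℝ)+1) by field_simp] at this
        exact this
      rw [div_lt_div_iff₀ hn0 (by positivity)] at hcmp
      linarith
    have hNn : N ≤ n := by
      have hx : (N:ℝ) ≤ (n:ℝ) := by linarith
      exact_mod_cast hx
    have hun : |u n| < |u 1| / 3 := hN n hNn
    have htun : t * u n ≤ |t| * |u n| := (le_abs_self _).trans (abs_mul t (u n)).le
    have h5 : |t| * |u n| < |t| * (|u 1| / 3) := mul_lt_mul_of_pos_left hun htpos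
    have h6 : 3 * (|t| * (|u 1|/3)) = |t| * |u 1| := by ring
    linarith

/-- The coordinate functional `x ↦ x 1` on `ℓ²`. -/
noncomputable def coord1 : Ell2 →ₗ[ℝ] ℝ where
  toFun x := x 1
  map_add' a b := by simp [lp.coeFn_add]
  map_smul' c x := by simp [lp.coeFn_smul]

/-- The hyperplane `{x ∈ ℓ² : x₁ = 0}`. -/
noncomputable def V : Submodule ℝ Ell2 := LinearMap.ker coord1

lemma norm_e (k : ℕ) : ‖e k‖ = 1 := by
  have hp : 0 < (2:ENNReal).toReal := by norm_num
  simpa [e] using lp.norm_single (E := fun _ : ℕ => ℝ) (p := 2) (by norm_num) k (1:ℝ)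

lemma norm_p_le (n : ℕ) : ‖p n‖ ≤ 2 / n := by
  have h : ‖p n‖ = |1/(n:ℝ)| * ‖e 1 + e n‖ := by
    rw [p, norm_smul, Real.norm_eq_abs]
  rcases Nat.eq_zero_or_pos n with rfl | hn
  · simp [h]
  · have hn0 : (0:ℝ) < n := by exact_mod_cast hn
    rw [h, abs_of_nonneg (by positivity)]
    have h2 : ‖e 1 + e n‖ ≤ 2 := by
      calc ‖e 1 + e n‖ ≤ ‖e 1‖ + ‖e n‖ := norm_add_le _ _
        _ = 2 := by rw [norm_e, norm_e]; norm_num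
    calc 1/(n:ℝ) * ‖e 1 + e n‖ ≤ 1/(n:ℝ) * 2 := by
          exact mul_le_mul_of_nonneg_left h2 (by positivity)
      _ = 2 / n := by ring

lemma tendsto_p : Filter.Tendsto p Filter.atTop (𝓝 0) :=
  squeeze_zero_norm norm_p_le (tendsto_const_div_atTop_nhds_zero_nat 2)

lemma f_p_lower {n : ℕ} (hn : 2 ≤ n) : 1/(2*(n:ℝ)) ≤ f (p n) := by
  by_contra hc
  push_neg at hc
  obtain ⟨y, hy, hd⟩ := (Metric.infDist_lt_iff ⟨0, zero_mem_F⟩).1 hc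
  exact (mem_F_iff.1 hy n hn) (by rwa [dist_comm])

theorem lipschitz_gateaux_hyperplane_not_frechet :
    LipschitzWith 1 f ∧
    (∀ u : Ell2, HasDerivAt (fun t : ℝ => f (t • u)) 0 0) ∧
    DifferentiableAt ℝ (fun v : V => f ((0 : Ell2) + (v : Ell2))) (0 : V) ∧
    ¬ DifferentiableAt ℝ f 0 := by
  have gateaux : ∀ u : Ell2, HasDerivAt (fun t : ℝ => f (t • u)) 0 0 := by
    intro u
    have heq : (fun t : ℝ => f (t • u)) =ᶠ[𝓝 (0:ℝ)] (fun _ => 0) :=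
      (line_eventually_mem u).mono fun t ht => Metric.infDist_zero_of_mem ht
    exact (hasDerivAt_const (0:ℝ) (0:ℝ)).congr_of_eventuallyEq heq
  refine ⟨Metric.lipschitz_infDist_pt F, gateaux, ?_, ?_⟩
  · have hfun : (fun v : V => f ((0 : Ell2) + (v : Ell2))) = fun _ => 0 := by
      funext v
      have hv : (v:Ell2) 1 = 0 := v.2
      rw [zero_add]
      exact Metric.infDist_zero_of_mem (mem_F_of_coord1_zero hv)
    rw [hfun]
    exact differentiableAt_const 0
  · intro hd
    have hF : HasFDerivAt f (fderiv ℝ f 0) 0 := hd.hasFDerivAt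
    have hLzero : ∀ u : Ell2, fderiv ℝ f 0 u = 0 := by
      intro u
      have hg : HasDerivAt (fun t : ℝ => t • u) u 0 := by
        simpa using (hasDerivAt_id (0:ℝ)).smul_const u
      have hF' : HasFDerivAt f (fderiv ℝ f 0) ((0:ℝ) • u) := by
        rw [zero_smul]; exact hF
      have hcomp := hF'.comp_hasDerivAt (0:ℝ) hg
      exact hcomp.unique (gateaux u)
    have hL0 : fderiv ℝ f 0 = 0 := ContinuousLinearMap.ext fun u => by
      simp [hLzero u]
    rw [hL0] at hF
    have hO : (fun x : Ell2 => f x) =o[𝓝 (0:Ell2)] fun x => x := by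
      have := hF.isLittleO
      simpa [Metric.infDist_zero_of_mem zero_mem_F, f] using this
    have hbound := hO.def (by norm_num : (0:ℝ) < 1/8)
    have hev := tendsto_p.eventually hbound
    obtain ⟨n, hb, hn2⟩ := (hev.and (Filter.eventually_ge_atTop 2)).exists
    have hn0 : (0:ℝ) < n := by positivity
    have h1 : 1/(2*(n:ℝ)) ≤ f (p n) := f_p_lower hn2
    have h2 : ‖f (p n)‖ = f (p n) := by
      rw [Real.norm_eq_abs]; exact abs_of_nonneg Metric.infDist_nonneg
    have h3 : ‖p n‖ ≤ 2 / n := norm_p_le n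
    rw [h2] at hb
    have h5 : f (p n) ≤ 1/8 * (2/(n:ℝ)) := by
      calc f (p n) ≤ 1/8 * ‖p n‖ := by simpa using hb
        _ ≤ 1/8 * (2/(n:ℝ)) := by linarith
    have : 1/(2*(n:ℝ)) ≤ 1/(4*(n:ℝ)) := by
      calc 1/(2*(n:ℝ)) ≤ f (p n) := h1
        _ ≤ 1/8 * (2/(n:ℝ)) := h5
        _ = 1/(4*(n:ℝ)) := by ring
    rw [div_le_div_iff₀ (by positivity) (by positivity)] at this
    linarith
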